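/- Let N be a positive integer and let f : ZMod N → ℂ be nonzero such that f(x) is a nonnegative real for every x, (𝓕 f)(k) is a nonnegative real for every k, and |supp f| · |supp 𝓕 f| = N. Then there exist an additive subgroup H of ZMod N and a positive real c such that f = c · 1_H. (This is Corollary 3.14 of the paper — if x and 𝓕(x) are positive and 𝒮(x)𝒮(𝓕(x)) = 1, then x is a biprojection — specialized to L^∞(ℤ/Nℤ).) -/

import Mathlib

open Complex Finset

/-- The unitary discrete Fourier transform on `ZMod N`. -/
noncomputable def dft (N : ℕ) [NeZero N] (f : ZMod N → ℂ) : ZMod N → ℂ :=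
  fun k => (((N : ℝ) ^ (-(1/2 : ℝ)) : ℝ) : ℂ) *
    ∑ x : ZMod N, f x *
      Complex.exp (-2 * Real.pi * Complex.I * (k.val : ℂ) * (x.val : ℂ) / (N : ℂ))

namespace BiprojAux

noncomputable def E (N : ℕ) (m : ℤ) : ℂ :=
  Complex.exp (((2 * Real.pi * m / N : ℝ) : ℂ) * Complex.I)

variable (N : ℕ) [NeZero N]

lemma E_congr {m m' : ℤ} (h : (m : ZMod N) = (m' : ZMod N)) : E N m = E N m' := by
  have hN : (N : ℝ) ≠ 0 := Nat.cast_ne_zero.mpr (NeZero.ne N)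
  obtain ⟨t, ht⟩ : (N : ℤ) ∣ m - m' := ((ZMod.intCast_eq_intCast_iff _ _ _).mp h).symm.dvd
  have hm : (m : ℝ) = m' + N * t := by
    have : (m : ℝ) - m' = N * t := by exact_mod_cast congrArg (fun z : ℤ => (z : ℝ)) ht
    linarith
  have hNc : (N : ℂ) ≠ 0 := Nat.cast_ne_zero.mpr (NeZero.ne N)
  have hmc : (m : ℂ) = m' + N * t := by exact_mod_cast hm
  rw [E, E, Complex.exp_eq_exp_iff_exists_int]
  refine ⟨t, ?_⟩
  push_cast
  rw [hmc]
  field_simp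

lemma E_abs (m : ℤ) : ‖E N m‖ = 1 := Complex.norm_exp_ofReal_mul_I _

lemma E_re_le (m : ℤ) : (E N m).re ≤ 1 := by
  simpa [E_abs] using Complex.re_le_norm (E N m)

lemma E_zero : E N 0 = 1 := by simp [E]

lemma E_add (m m' : ℤ) : E N (m + m') = E N m * E N m' := by
  rw [E, E, E, ← Complex.exp_add]
  congr 1
  push_cast
  ring

lemma E_pow (t : ℕ) (m : ℤ) : E N (t * m) = (E N m) ^ t := by
  rw [E, E, ← Complex.exp_nat_mul]
  congr 1
  push_cast
  ring

lemma E_eq_one_iff {m : ℤ} : E N m = 1 ↔ (m : ZMod N) = 0 := by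
  have hN : (N : ℝ) ≠ 0 := Nat.cast_ne_zero.mpr (NeZero.ne N)
  constructor
  · intro h
    rw [E, Complex.exp_eq_one_iff] at h
    obtain ⟨t, ht⟩ := h
    rw [ZMod.intCast_zmod_eq_zero_iff_dvd]
    refine ⟨t, ?_⟩
    have : ((2 * Real.pi * m / N : ℝ) : ℂ) = ((t * (2 * Real.pi) : ℝ) : ℂ) := by
      apply mul_right_cancel₀ Complex.I_ne_zero
      rw [ht]; push_cast; ring
    have h2 : (2 * Real.pi * m / N : ℝ) = t * (2 * Real.pi) := by exact_mod_cast this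
    have hpi : Real.pi ≠ 0 := Real.pi_ne_zero
    have : (m : ℝ) = N * t := by
      field_simp at h2
      have h3 : (2 * Real.pi) * (m : ℝ) = (2 * Real.pi) * ((N : ℝ) * t) := by
        linear_combination (2 * Real.pi) * h2
      have := mul_left_cancel₀ (show (2 * Real.pi : ℝ) ≠ 0 by positivity) h3
      linarith
    exact_mod_cast this
  · intro h
    rw [show (1 : ℂ) = E N 0 from (E_zero N).symm]
    exact E_congr N (by simpa using h)

lemma eq_one_of_re_eq_one {z : ℂ} (habs : ‖z‖ = 1) (hre : z.re = 1) : z = 1 := by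
  have h2 : Complex.normSq z = 1 := by rw [← Complex.sq_norm, habs]; norm_num
  rw [Complex.normSq_apply, hre] at h2
  have : z.im = 0 := by nlinarith
  exact Complex.ext (by simp [hre]) (by simp [this])

lemma sum_val (h : ℕ → ℂ) : ∑ k : ZMod N, h k.val = ∑ j ∈ Finset.range N, h j := by
  refine Finset.sum_nbij' (fun k => k.val) (fun j => (j : ZMod N)) ?_ ?_ ?_ ?_ ?_
  · intro k _; exact Finset.mem_range.mpr (ZMod.val_lt k)
  · intro j _; exact Finset.mem_univ _
  · intro k _; simp [ZMod.natCast_val, ZMod.cast_id]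
  · intro j hj; exact ZMod.val_cast_of_lt (Finset.mem_range.mp hj)
  · intro k _; rfl

lemma sum_E_mul (a : ZMod N) :
    ∑ k : ZMod N, E N ((a.val : ℤ) * (k.val : ℤ)) = if a = 0 then (N : ℂ) else 0 := by
  have key : ∀ k : ZMod N, E N ((a.val : ℤ) * (k.val : ℤ)) = (E N a.val) ^ k.val := by
    intro k
    rw [← E_pow]
    exact E_congr N (by push_cast; ring)
  simp_rw [key]
  rw [sum_val N (fun j => (E N a.val) ^ j)]
  by_cases ha : a = 0
  · subst ha
    simp [ZMod.val_zero, E_zero]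
  · have hz : E N a.val ≠ 1 := by
      rw [Ne, E_eq_one_iff]
      simpa [ZMod.natCast_val, ZMod.cast_id] using ha
    have hzN : (E N a.val) ^ N = 1 := by
      rw [← E_pow]
      rw [show ((N : ℤ) * a.val) = ((N * a.val : ℕ) : ℤ) by push_cast; ring]
      rw [E_eq_one_iff]
      push_cast
      simp [ZMod.natCast_self]
    rw [if_neg ha, geom_sum_eq hz, hzN]
    simp

lemma dft_eq (f : ZMod N → ℂ) (k : ZMod N) :
    dft N f k = (((N : ℝ) ^ (-(1/2 : ℝ)) : ℝ) : ℂ) *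
      ∑ x : ZMod N, f x * E N (-((k.val : ℤ) * (x.val : ℤ))) := by
  unfold dft E
  congr 1
  refine Finset.sum_congr rfl fun x _ => ?_
  congr 1
  push_cast
  ring

lemma dft_dft (f : ZMod N → ℂ) (x : ZMod N) : dft N (dft N f) x = f (-x) := by
  have hNpos : (0:ℝ) < N := Nat.cast_pos.mpr (Nat.pos_of_ne_zero (NeZero.ne N))
  set r : ℝ := (N:ℝ) ^ (-(1/2:ℝ)) with hr
  have hr2 : (r : ℂ) * r * N = 1 := by
    have hrr : r * r = (N:ℝ)⁻¹ := by
      rw [hr, ← Real.rpow_add hNpos]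
      norm_num [Real.rpow_neg_one]
    have hne : (N:ℝ) ≠ 0 := ne_of_gt hNpos
    rw [show ((r:ℂ) * r = ((r*r : ℝ) : ℂ)) by push_cast; ring, hrr]
    have hneC : (N:ℂ) ≠ 0 := by exact_mod_cast hne
    push_cast
    field_simp
  have e1 : ∀ k : ZMod N, (dft N f k) * E N (-((x.val:ℤ) * k.val))
      = (r:ℂ) * ∑ y, f y * E N ((((-(x+y) : ZMod N).val : ℤ)) * k.val) := by
    intro k
    rw [dft_eq, mul_assoc]
    congr 1
    rw [Finset.sum_mul]
    refine Finset.sum_congr rfl fun y _ => ?_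
    rw [mul_assoc, ← E_add]
    congr 1
    refine E_congr N ?_
    push_cast [ZMod.natCast_val, ZMod.cast_id]
    ring
  rw [dft_eq]
  simp_rw [e1]
  rw [← Finset.mul_sum, ← mul_assoc]
  rw [Finset.sum_comm]
  simp_rw [← Finset.mul_sum, sum_E_mul]
  have : ∑ y : ZMod N, f y * (if (-(x+y) : ZMod N) = 0 then (N:ℂ) else 0)
      = f (-x) * N := by
    rw [Finset.sum_eq_single (-x)]
    · simp
    · intro y _ hy
      rw [if_neg, mul_zero]
      intro h
      exact hy (eq_neg_of_add_eq_zero_right (neg_eq_zero.mp h))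
    · intro h; exact absurd (Finset.mem_univ _) h
  rw [this]
  linear_combination f (-x) * hr2

end BiprojAux

set_option maxHeartbeats 1000000 in
/-- If f and its Fourier transform are (pointwise) nonnegative and f saturates
the Donoho–Stark uncertainty principle, then f is a positive multiple of the
indicator function of a subgroup (a biprojection). -/
theorem positive_minimizer_is_biprojection (N : ℕ) [NeZero N] (f : ZMod N → ℂ)
    (hf : f ≠ 0)
    (hpos : ∀ x : ZMod N, (f x).im = 0 ∧ 0 ≤ (f x).re)
    (hposF : ∀ k : ZMod N, (dft N f k).im = 0 ∧ 0 ≤ (dft N f k).re)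
    (hmin : (Function.support f).ncard * (Function.support (dft N f)).ncard = N) :
    ∃ (H : AddSubgroup (ZMod N)) (c : ℝ), 0 < c ∧
      f = fun x => (c : ℂ) * Set.indicator (H : Set (ZMod N)) (fun _ => (1 : ℂ)) x := by
  classical
  open BiprojAux in
  have hNpos : 0 < N := Nat.pos_of_ne_zero (NeZero.ne N)
  have hNR : (0:ℝ) < N := Nat.cast_pos.mpr hNpos
  set r : ℝ := (N:ℝ) ^ (-(1/2:ℝ)) with hr
  have hrpos : 0 < r := Real.rpow_pos_of_pos hNR _
  have hr2 : r * r * N = 1 := by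
    have hrr : r * r = (N:ℝ)⁻¹ := by
      rw [hr, ← Real.rpow_add hNR]; norm_num [Real.rpow_neg_one]
    rw [hrr]; field_simp
  set g : ZMod N → ℂ := dft N f with hg
  have hfre : ∀ x, f x = (((f x).re : ℝ) : ℂ) := fun x => by
    conv_lhs => rw [← Complex.re_add_im (f x)]
    rw [(hpos x).1]; simp
  have hgre : ∀ k, g k = (((g k).re : ℝ) : ℂ) := fun k => by
    conv_lhs => rw [← Complex.re_add_im (g k)]
    rw [(hposF k).1]; simp
  set F : ZMod N → ℝ := fun x => (f x).re with hF
  set G : ZMod N → ℝ := fun k => (g k).re with hG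
  have hF0 : ∀ x, 0 ≤ F x := fun x => (hpos x).2
  have hG0 : ∀ k, 0 ≤ G k := fun k => (hposF k).2
  have hFzero : ∀ x, f x = 0 ↔ F x = 0 := fun x => by
    rw [hfre x]; exact Complex.ofReal_eq_zero
  set A : Finset (ZMod N) := Finset.univ.filter (fun x => f x ≠ 0) with hA
  set B : Finset (ZMod N) := Finset.univ.filter (fun k => g k ≠ 0) with hB
  have hsuppA : Function.support f = ↑A := by ext x; simp [hA, Function.mem_support]
  have hsuppB : Function.support g = ↑B := by ext k; simp [hB, Function.mem_support]
  have hcard : (A.card : ℝ) * (B.card : ℝ) = (N : ℝ) := by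
    rw [hsuppA, hsuppB, Set.ncard_coe_finset, Set.ncard_coe_finset] at hmin
    exact_mod_cast hmin
  set S : ℝ := ∑ x, F x with hS
  set T : ℝ := ∑ k, G k with hT
  -- sum of f is S
  have hsumf : ∑ x, f x = ((S : ℝ) : ℂ) := by
    rw [hS]; push_cast; exact Finset.sum_congr rfl fun x _ => hfre x
  have hsumg : ∑ k, g k = ((T : ℝ) : ℂ) := by
    rw [hT]; push_cast; exact Finset.sum_congr rfl fun k _ => hgre k
  -- g 0 = r * S
  have hg0 : g 0 = ((r * S : ℝ) : ℂ) := by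
    rw [hg, dft_eq]
    have h1 : ∀ x : ZMod N, f x * E N (-(((0 : ZMod N).val : ℤ) * (x.val : ℤ))) = f x := by
      intro x; simp [ZMod.val_zero, E_zero]
    rw [Finset.sum_congr rfl fun x _ => h1 x, hsumf]
    push_cast; ring
  -- inversion
  have hinv : ∀ y, f y = dft N g (-y) := fun y => by
    rw [hg, dft_dft]; simp
  have hf0 : f 0 = ((r * T : ℝ) : ℂ) := by
    rw [hinv 0, dft_eq]
    have h1 : ∀ k : ZMod N, g k * E N (-((((-0 : ZMod N)).val : ℤ) * (k.val : ℤ))) = g k := by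
      intro k; simp [ZMod.val_zero, E_zero]
    rw [Finset.sum_congr rfl fun k _ => h1 k, hsumg]
    push_cast; ring
  -- bounds
  have habsf : ∀ y, ‖f y‖ = F y := fun y => by
    rw [hfre y, Complex.norm_of_nonneg (hF0 y)]
  have habsg : ∀ k, ‖g k‖ = G k := fun k => by
    rw [hgre k, Complex.norm_of_nonneg (hG0 k)]
  have hboundF : ∀ y, F y ≤ r * T := by
    intro y
    calc F y ≤ ‖f y‖ := Complex.re_le_norm _
      _ = ‖(((r:ℝ)):ℂ) * ∑ k, g k * E N (-((((-y):ZMod N).val : ℤ) * (k.val:ℤ)))‖ := by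
          rw [← dft_eq, ← hinv y]
      _ ≤ r * ∑ k, G k := by
          rw [norm_mul]
          gcongr
          · rw [Complex.norm_of_nonneg hrpos.le]
          · calc ‖∑ k, g k * E N (-((((-y):ZMod N).val : ℤ) * (k.val:ℤ)))‖
                ≤ ∑ k, ‖g k * E N (-((((-y):ZMod N).val : ℤ) * (k.val:ℤ)))‖ :=
                  norm_sum_le _ _
              _ = ∑ k, G k := by
                  refine Finset.sum_congr rfl fun k _ => ?_
                  rw [norm_mul, E_abs, mul_one, habsg]
  have hboundG : ∀ k, G k ≤ r * S := by
    intro k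
    calc G k ≤ ‖g k‖ := Complex.re_le_norm _
      _ = ‖(((r:ℝ)):ℂ) * ∑ x, f x * E N (-((k.val : ℤ) * (x.val:ℤ)))‖ := by
          rw [← dft_eq, ← hg]
      _ ≤ r * ∑ x, F x := by
          rw [norm_mul]
          gcongr
          · rw [Complex.norm_of_nonneg hrpos.le]
          · calc ‖∑ x, f x * E N (-((k.val : ℤ) * (x.val:ℤ)))‖
                ≤ ∑ x, ‖f x * E N (-((k.val : ℤ) * (x.val:ℤ)))‖ :=
                  norm_sum_le _ _
              _ = ∑ x, F x := by
                  refine Finset.sum_congr rfl fun x _ => ?_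
                  rw [norm_mul, E_abs, mul_one, habsf]
  -- restrict sums to supports
  have hSA : S = ∑ x ∈ A, F x := by
    rw [hS]
    refine (Finset.sum_subset (Finset.subset_univ A) ?_).symm
    intro x _ hx
    have : f x = 0 := by by_contra h; exact hx (by simp [hA, h])
    exact (hFzero x).mp this
  have hTB : T = ∑ k ∈ B, G k := by
    rw [hT]
    refine (Finset.sum_subset (Finset.subset_univ B) ?_).symm
    intro k _ hk
    have h0 : g k = 0 := by by_contra h; exact hk (by simp [hB, h])
    rw [hG]; simp [h0]
  -- positivity of S and T
  have hSpos : 0 < S := by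
    obtain ⟨x0, hx0⟩ : ∃ x, f x ≠ 0 := Function.ne_iff.mp hf
    refine Finset.sum_pos' (fun x _ => hF0 x) ⟨x0, Finset.mem_univ _, ?_⟩
    rcases lt_or_eq_of_le (hF0 x0) with h | h
    · exact h
    · exact absurd ((hFzero x0).mpr h.symm) hx0
  have hG0pos : 0 < G 0 := by
    have : G 0 = r * S := by rw [hG]; simp [hg0]
    rw [this]; positivity
  have hTpos : 0 < T := by
    refine Finset.sum_pos' (fun k _ => hG0 k) ⟨0, Finset.mem_univ _, hG0pos⟩
  have h0B : (0 : ZMod N) ∈ B := by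
    simp only [hB, Finset.mem_filter, Finset.mem_univ, true_and]
    rw [hg0]
    exact_mod_cast ne_of_gt (by positivity : (0:ℝ) < r * S)
  have hBpos : (0:ℝ) < B.card := by
    have := Finset.card_pos.mpr ⟨0, h0B⟩
    exact_mod_cast this
  have hApos : (0:ℝ) < A.card := by
    have hx : ∃ x, x ∈ A := by
      obtain ⟨x0, hx0⟩ : ∃ x, f x ≠ 0 := Function.ne_iff.mp hf
      exact ⟨x0, by simp [hA, hx0]⟩
    have := Finset.card_pos.mpr hx
    exact_mod_cast this
  -- the chain of inequalities
  have hS_le : S ≤ (A.card : ℝ) * (r * T) := by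
    rw [hSA]
    calc ∑ x ∈ A, F x ≤ ∑ _x ∈ A, (r * T) := Finset.sum_le_sum fun x _ => hboundF x
      _ = (A.card : ℝ) * (r * T) := by rw [Finset.sum_const, nsmul_eq_mul]
  have hT_le : T ≤ (B.card : ℝ) * (r * S) := by
    rw [hTB]
    calc ∑ k ∈ B, G k ≤ ∑ _k ∈ B, (r * S) := Finset.sum_le_sum fun k _ => hboundG k
      _ = (B.card : ℝ) * (r * S) := by rw [Finset.sum_const, nsmul_eq_mul]
  have e2 : (A.card:ℝ) * (r * ((B.card:ℝ) * (r * S))) = S := by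
    have h3 : (A.card:ℝ) * (r * ((B.card:ℝ) * (r * S))) = ((A.card:ℝ) * (B.card:ℝ)) * (r * r) * S := by
      ring
    rw [h3, hcard]
    linear_combination S * hr2
  have e1 : (A.card:ℝ) * (r * T) ≤ (A.card:ℝ) * (r * ((B.card:ℝ) * (r * S))) := by
    exact mul_le_mul_of_nonneg_left (mul_le_mul_of_nonneg_left hT_le hrpos.le) hApos.le
  have eq1 : S = (A.card : ℝ) * (r * T) := le_antisymm hS_le (by rw [← e2] at hS_le ⊢; linarith [e1])
  have eq2 : T = (B.card : ℝ) * (r * S) := by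
    have h4 : (A.card:ℝ) * (r * T) = (A.card:ℝ) * (r * ((B.card:ℝ) * (r * S))) := by
      rw [← eq1, e2]
    have h5 := mul_left_cancel₀ (ne_of_gt hApos) h4
    exact mul_left_cancel₀ (ne_of_gt hrpos) h5
  -- pointwise equalities on supports
  have eqFA : ∀ x ∈ A, F x = r * T := by
    have hsum : ∑ x ∈ A, F x = ∑ _x ∈ A, (r * T) := by
      rw [← hSA, Finset.sum_const, nsmul_eq_mul, ← eq1]
    exact fun x hx =>
      (Finset.sum_eq_sum_iff_of_le fun i _ => hboundF i).mp hsum x hx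
  have eqGB : ∀ k ∈ B, G k = r * S := by
    have hsum : ∑ k ∈ B, G k = ∑ _k ∈ B, (r * S) := by
      rw [← hTB, Finset.sum_const, nsmul_eq_mul, ← eq2]
    exact fun k hk =>
      (Finset.sum_eq_sum_iff_of_le fun i _ => hboundG i).mp hsum k hk
  -- g is (r*S) times indicator of B
  have hgind : ∀ k, g k = if k ∈ B then ((r * S : ℝ) : ℂ) else 0 := by
    intro k
    by_cases hk : k ∈ B
    · rw [if_pos hk, hgre k]
      exact congrArg Complex.ofReal (eqGB k hk)
    · rw [if_neg hk]
      by_contra h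
      exact hk (by simp [hB, h])
  -- formula for f
  have hform : ∀ w, f w = (((r:ℝ)):ℂ) * (((r * S : ℝ)):ℂ) * ∑ k ∈ B, E N ((w.val : ℤ) * (k.val : ℤ)) := by
    intro w
    rw [hinv w, dft_eq]
    have h1 : ∀ k : ZMod N, g k * E N (-((((-w) : ZMod N).val : ℤ) * (k.val : ℤ)))
        = if k ∈ B then ((r * S : ℝ):ℂ) * E N ((w.val : ℤ) * (k.val : ℤ)) else 0 := by
      intro k
      rw [hgind k]
      by_cases hk : k ∈ B
      · rw [if_pos hk, if_pos hk]
        congr 1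
        refine E_congr N ?_
        push_cast [ZMod.natCast_val, ZMod.cast_id]
        ring
      · rw [if_neg hk, if_neg hk, zero_mul]
    rw [Finset.sum_congr rfl fun k _ => h1 k]
    rw [Finset.sum_ite_mem, Finset.univ_inter, ← Finset.mul_sum, ← mul_assoc]
  -- membership in A iff annihilates B
  have hmemA : ∀ w, w ∈ A ↔ ∀ k ∈ B, w * k = 0 := by
    intro w
    constructor
    · intro hw
      have hfw : f w = ((r * T : ℝ) : ℂ) := by
        rw [hfre w]
        exact congrArg Complex.ofReal (eqFA w hw)
      have hσ : ∑ k ∈ B, E N ((w.val : ℤ) * (k.val : ℤ)) = (B.card : ℂ) := by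
        have h6 : (((r:ℝ)):ℂ) * (((r * S : ℝ)):ℂ) * ∑ k ∈ B, E N ((w.val : ℤ) * (k.val : ℤ))
            = (((r:ℝ)):ℂ) * (((r * S : ℝ)):ℂ) * (B.card : ℂ) := by
          rw [← hform w, hfw, eq2]
          push_cast
          ring
        have hne : ((((r:ℝ)):ℂ) * (((r * S : ℝ)):ℂ)) ≠ 0 := by
          rw [← Complex.ofReal_mul, Ne, Complex.ofReal_eq_zero]
          have : (0:ℝ) < r * (r * S) := by positivity
          exact ne_of_gt this
        exact mul_left_cancel₀ hne h6
      intro k hk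
      have hre1 : ∑ k ∈ B, (E N ((w.val : ℤ) * (k.val : ℤ))).re = (B.card : ℝ) := by
        have := congrArg Complex.re hσ
        simpa [Complex.re_sum] using this
      have hall : ∀ j ∈ B, (E N ((w.val : ℤ) * (j.val : ℤ))).re = 1 := by
        have hsum : ∑ j ∈ B, (E N ((w.val : ℤ) * (j.val : ℤ))).re = ∑ _j ∈ B, (1:ℝ) := by
          rw [hre1, Finset.sum_const, nsmul_eq_mul, mul_one]
        exact (Finset.sum_eq_sum_iff_of_le fun j _ => E_re_le N _).mp hsum
      have hE1 : E N ((w.val : ℤ) * (k.val : ℤ)) = 1 :=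
        eq_one_of_re_eq_one (E_abs N _) (hall k hk)
      have := (E_eq_one_iff N).mp hE1
      rw [show (((w.val : ℤ) * (k.val : ℤ) : ℤ) : ZMod N) = w * k by
        push_cast [ZMod.natCast_val, ZMod.cast_id]; ring] at this
      exact this
    · intro hw
      have hσ : ∑ k ∈ B, E N ((w.val : ℤ) * (k.val : ℤ)) = (B.card : ℂ) := by
        have : ∀ k ∈ B, E N ((w.val : ℤ) * (k.val : ℤ)) = 1 := by
          intro k hk
          rw [E_eq_one_iff]
          rw [show (((w.val : ℤ) * (k.val : ℤ) : ℤ) : ZMod N) = w * k by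
            push_cast [ZMod.natCast_val, ZMod.cast_id]; ring]
          exact hw k hk
        rw [Finset.sum_congr rfl this, Finset.sum_const, nsmul_eq_mul, mul_one]
      have : f w = (((r:ℝ)):ℂ) * (((r * S : ℝ)):ℂ) * (B.card : ℂ) := by
        rw [hform w, hσ]
      simp only [hA, Finset.mem_filter, Finset.mem_univ, true_and]
      rw [this]
      have hp : (0:ℝ) < r * (r * S) * B.card := mul_pos (mul_pos hrpos (mul_pos hrpos hSpos)) hBpos
      intro h
      have : ((r * (r * S) * (B.card:ℝ) : ℝ) : ℂ) = 0 := by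
        rw [← h]; push_cast; ring
      rw [Complex.ofReal_eq_zero] at this
      exact ne_of_gt hp this
  -- assemble
  refine ⟨{ carrier := {w : ZMod N | ∀ k ∈ B, w * k = 0}
            add_mem' := by
              intro a b ha hb k hk
              have := ha k hk
              have := hb k hk
              simp only [Set.mem_setOf_eq] at *
              rw [add_mul, ha k hk, hb k hk, add_zero]
            zero_mem' := by
              intro k hk
              exact zero_mul k
            neg_mem' := by
              intro a ha k hk
              simp only [Set.mem_setOf_eq] at *
              rw [neg_mul, ha k hk, neg_zero] }, r * T, mul_pos hrpos hTpos, ?_⟩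
  funext w
  rw [Set.indicator_apply]
  split_ifs with hw
  · have hw' : ∀ k ∈ B, w * k = 0 := hw
    rw [mul_one, hfre w]
    exact congrArg Complex.ofReal (eqFA w ((hmemA w).mpr hw'))
  · have hw' : ¬ (∀ k ∈ B, w * k = 0) := hw
    rw [mul_zero]
    have hwA : w ∉ A := fun h => hw' ((hmemA w).mp h)
    by_contra h
    exact hwA (by simp [hA, h])
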